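/- Let I1 = (F, C, s, d, c, f) be a CFL instance with costs satisfying the four-point metric inequality and with Σ_{j∈C} d j ≤ Σ_{i∈F} s i, and let I2 be the associated TMC instance of the metric CFL-to-TMC reduction. Then the infimum of the objective values over all feasible CFL solutions of I1 equals the infimum of the objective values over all feasible TMC solutions of I2. -/

import Mathlib

open Finset


lemma clean_case {F C : Type} [Fintype F] [Fintype C]
    (s : F → ℕ) (d : C → ℕ) (c : F → C → ℝ) (f : F → ℕ)
    (d' : C ⊕ F → ℕ) (c' : F → C ⊕ F → ℝ)
    (hd'C : ∀ j : C, d' (Sum.inl j) = d j)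
    (hc'C : ∀ (i : F) (j : C), c' i (Sum.inl j) = c i j)
    (hc'nn : ∀ i j', 0 ≤ c' i j')
    (z' : C ⊕ F → ℝ) (hz' : ∀ j', z' j' = 0 ∨ z' j' = 1)
    (hzC : ∀ j : C, z' (Sum.inl j) = 0)
    (x' : F → C ⊕ F → ℝ)
    (hx'nn : ∀ i j', 0 ≤ x' i j')
    (hdem : ∀ j', ∑ i, x' i j' = (1 - z' j') * (d' j' : ℝ))
    (hcap : ∀ i, ∑ j', x' i j' ≤ (s i : ℝ))
    (hclean : ∀ i, z' (Sum.inr i) = 0 → ∀ j', j' ≠ Sum.inr i → x' i j' = 0) :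
    ∃ (x : F → C → ℝ) (z : F → ℝ),
      (∀ i j, 0 ≤ x i j) ∧ (∀ i, z i = 0 ∨ z i = 1) ∧
      (∀ j, ∑ i, x i j = (d j : ℝ)) ∧ (∀ i, ∑ j, x i j ≤ (s i : ℝ) * z i) ∧
      (∑ i, ∑ j, c i j * x i j) + (∑ i, (f i : ℝ) * z i)
        ≤ (∑ i, ∑ j', c' i j' * x' i j') + (∑ i, (f i : ℝ) * z' (Sum.inr i)) := by
  refine ⟨fun i j => x' i (Sum.inl j), fun i => z' (Sum.inr i),
    fun i j => hx'nn i _, fun i => hz' _, ?_, ?_, ?_⟩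
  · intro j
    have := hdem (Sum.inl j)
    rwa [hzC, hd'C, sub_zero, one_mul] at this
  · intro i
    simp only []
    rcases hz' (Sum.inr i) with h0 | h1
    · rw [h0, mul_zero]
      have : ∀ j : C, x' i (Sum.inl j) = 0 := fun j => hclean i h0 _ (by simp)
      simp [this]
    · rw [h1, mul_one]
      calc ∑ j, x' i (Sum.inl j) ≤ ∑ j', x' i j' := by
            rw [Fintype.sum_sum_type]
            have : 0 ≤ ∑ i0, x' i (Sum.inr i0) :=
              Finset.sum_nonneg fun _ _ => hx'nn _ _
            linarith
        _ ≤ (s i : ℝ) := hcap i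
  · simp only []
    gcongr with i _
    rw [Fintype.sum_sum_type]
    have h1 : ∑ j, c i j * x' i (Sum.inl j) = ∑ j, c' i (Sum.inl j) * x' i (Sum.inl j) := by
      simp [hc'C]
    have h2 : 0 ≤ ∑ i0, c' i (Sum.inr i0) * x' i (Sum.inr i0) :=
      Finset.sum_nonneg fun i0 _ => mul_nonneg (hc'nn _ _) (hx'nn _ _)
    linarith


open scoped Classical in
lemma key_lemma {F C : Type} [Fintype F] [Fintype C]
    (s : F → ℕ) (d : C → ℕ) (c : F → C → ℝ) (f : F → ℕ)
    (d' : C ⊕ F → ℕ) (c' : F → C ⊕ F → ℝ)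
    (hd'C : ∀ j : C, d' (Sum.inl j) = d j)
    (hd'F : ∀ i : F, d' (Sum.inr i) = s i)
    (hc'C : ∀ (i : F) (j : C), c' i (Sum.inl j) = c i j)
    (hc'diag : ∀ i : F, c' i (Sum.inr i) = 0)
    (hc'nn : ∀ i j', 0 ≤ c' i j')
    (htri : ∀ i i0 : F, i ≠ i0 → ∀ j', j' ≠ Sum.inr i0 →
      c' i j' ≤ c' i (Sum.inr i0) + c' i0 j')
    (z' : C ⊕ F → ℝ) (hz' : ∀ j', z' j' = 0 ∨ z' j' = 1)
    (hzC : ∀ j : C, z' (Sum.inl j) = 0) :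
    ∀ (n : ℕ) (x' : F → C ⊕ F → ℝ),
      (Finset.univ.filter (fun i => z' (Sum.inr i) = 0 ∧
          ∃ j', j' ≠ Sum.inr i ∧ x' i j' ≠ 0)).card ≤ n →
      (∀ i j', 0 ≤ x' i j') →
      (∀ j', ∑ i, x' i j' = (1 - z' j') * (d' j' : ℝ)) →
      (∀ i, ∑ j', x' i j' ≤ (s i : ℝ)) →
      ∃ (x : F → C → ℝ) (z : F → ℝ),
        (∀ i j, 0 ≤ x i j) ∧ (∀ i, z i = 0 ∨ z i = 1) ∧
        (∀ j, ∑ i, x i j = (d j : ℝ)) ∧ (∀ i, ∑ j, x i j ≤ (s i : ℝ) * z i) ∧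
        (∑ i, ∑ j, c i j * x i j) + (∑ i, (f i : ℝ) * z i)
          ≤ (∑ i, ∑ j', c' i j' * x' i j') + (∑ i, (f i : ℝ) * z' (Sum.inr i)) := by
  intro n
  induction n with
  | zero =>
    intro x' hcard hnn hdem hcap
    refine clean_case s d c f d' c' hd'C hc'C hc'nn z' hz' hzC x' hnn hdem hcap ?_
    intro i hz0 j' hne
    by_contra hx0
    have hmem : i ∈ Finset.univ.filter (fun i => z' (Sum.inr i) = 0 ∧
        ∃ j', j' ≠ Sum.inr i ∧ x' i j' ≠ 0) := by
      simp only [mem_filter, mem_univ, true_and]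
      exact ⟨hz0, j', hne, hx0⟩
    have := Finset.card_pos.mpr ⟨i, hmem⟩
    omega
  | succ n ih =>
    intro x' hcard hnn hdem hcap
    by_cases hcl : ∀ i, z' (Sum.inr i) = 0 → ∀ j', j' ≠ Sum.inr i → x' i j' = 0
    · exact clean_case s d c f d' c' hd'C hc'C hc'nn z' hz' hzC x' hnn hdem hcap hcl
    push_neg at hcl
    obtain ⟨p, hz0, j₀, hj₀ne, hj₀⟩ := hcl
    set A : ℝ := ∑ j' ∈ Finset.univ.erase (Sum.inr p), x' p j' with hA
    set T : ℝ := ∑ i ∈ Finset.univ.erase p, x' i (Sum.inr p) with hT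
    have hrowsplit : ∀ (i : F) (g : C ⊕ F → ℝ),
        ∑ j', g j' = g (Sum.inr i) + ∑ j' ∈ Finset.univ.erase (Sum.inr i), g j' :=
      fun i g => (Finset.add_sum_erase _ g (mem_univ _)).symm
    have hcolsplit : ∀ (g : F → ℝ),
        ∑ i, g i = g p + ∑ i ∈ Finset.univ.erase p, g i :=
      fun g => (Finset.add_sum_erase _ g (mem_univ _)).symm
    have hApos : 0 < A := by
      have h1 : 0 < x' p j₀ := lt_of_le_of_ne (hnn _ _) (Ne.symm hj₀)
      have h2 : x' p j₀ ≤ A :=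
        Finset.single_le_sum (f := fun j' => x' p j') (fun _ _ => hnn _ _) (Finset.mem_erase.mpr ⟨hj₀ne, mem_univ _⟩)
      linarith
    have hcolstar : x' p (Sum.inr p) + T = (s p : ℝ) := by
      have := hdem (Sum.inr p)
      rw [hz0, hd'F, sub_zero, one_mul] at this
      rw [hT, ← hcolsplit (fun i => x' i (Sum.inr p)), this]
    have hAT : A ≤ T := by
      have h1 := hcap p
      rw [hrowsplit p (x' p), ← hA] at h1
      linarith
    have hTpos : 0 < T := lt_of_lt_of_le hApos hAT
    set w : F → ℝ := fun i => x' i (Sum.inr p) / T with hw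
    have hwnn : ∀ i, 0 ≤ w i := fun i => div_nonneg (hnn _ _) hTpos.le
    have hwsum : ∑ i ∈ Finset.univ.erase p, w i = 1 := by
      rw [hw, ← Finset.sum_div, ← hT, div_self hTpos.ne']
    have hwA : ∀ i, w i * A ≤ x' i (Sum.inr p) := by
      intro i
      rw [hw]
      calc x' i (Sum.inr p) / T * A = x' i (Sum.inr p) * (A / T) := by ring
        _ ≤ x' i (Sum.inr p) * 1 := by
            apply mul_le_mul_of_nonneg_left _ (hnn _ _)
            exact (div_le_one hTpos).mpr hAT
        _ = x' i (Sum.inr p) := mul_one _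
    set x'' : F → C ⊕ F → ℝ := fun i j' =>
      if i = p then (if j' = Sum.inr p then x' p (Sum.inr p) + A else 0)
      else if j' = Sum.inr p then x' i j' - w i * A
      else x' i j' + w i * x' p j' with hx''
    have hnn'' : ∀ i j', 0 ≤ x'' i j' := by
      intro i j'
      simp only [hx'']
      by_cases hi : i = p
      · rw [if_pos hi]
        by_cases hj : j' = Sum.inr p
        · rw [if_pos hj]
          have := hnn p (Sum.inr p); linarith
        · rw [if_neg hj]
      · rw [if_neg hi]
        by_cases hj : j' = Sum.inr p
        · rw [if_pos hj, hj]
          linarith [hwA i]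
        · rw [if_neg hj]
          have := mul_nonneg (hwnn i) (hnn p j')
          linarith [hnn i j']
    have hrowp : ∑ j', x'' p j' = x' p (Sum.inr p) + A := by
      rw [hrowsplit p (x'' p)]
      have h1 : x'' p (Sum.inr p) = x' p (Sum.inr p) + A := by
        simp [hx'']
      have h2 : ∀ j' ∈ Finset.univ.erase (Sum.inr p), x'' p j' = 0 := by
        intro j' hj'
        simp [hx'', (Finset.mem_erase.mp hj').1]
      rw [h1, Finset.sum_eq_zero h2, add_zero]
    have hrowo : ∀ i, i ≠ p → ∑ j', x'' i j' = ∑ j', x' i j' := by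
      intro i hi
      rw [hrowsplit p (x'' i), hrowsplit p (x' i)]
      have h1 : x'' i (Sum.inr p) = x' i (Sum.inr p) - w i * A := by
        simp [hx'', hi]
      have h2 : ∀ j' ∈ Finset.univ.erase (Sum.inr p), x'' i j' = x' i j' + w i * x' p j' := by
        intro j' hj'
        simp [hx'', hi, (Finset.mem_erase.mp hj').1]
      rw [h1, Finset.sum_congr rfl h2, Finset.sum_add_distrib, ← Finset.mul_sum, ← hA]
      ring
    have hcap'' : ∀ i, ∑ j', x'' i j' ≤ (s i : ℝ) := by
      intro i
      by_cases hi : i = p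
      · rw [hi, hrowp]
        have he : ∑ j', x' p j' = x' p (Sum.inr p) + A := by
          rw [hrowsplit p (x' p), hA]
        linarith [hcap p]
      · rw [hrowo i hi]; exact hcap i
    have hdem'' : ∀ j', ∑ i, x'' i j' = (1 - z' j') * (d' j' : ℝ) := by
      intro j'
      rw [← hdem j']
      by_cases hj : j' = Sum.inr p
      · subst hj
        rw [hcolsplit (fun i => x'' i (Sum.inr p)), hcolsplit (fun i => x' i (Sum.inr p))]
        have h1 : x'' p (Sum.inr p) = x' p (Sum.inr p) + A := by
          simp [hx'']
        have h2 : ∀ i ∈ Finset.univ.erase p, x'' i (Sum.inr p) = x' i (Sum.inr p) - w i * A := by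
          intro i hi
          simp [hx'', (Finset.mem_erase.mp hi).1]
        rw [h1, Finset.sum_congr rfl h2, Finset.sum_sub_distrib, ← Finset.sum_mul, hwsum, one_mul]
        ring
      · rw [hcolsplit (fun i => x'' i j'), hcolsplit (fun i => x' i j')]
        have h1 : x'' p j' = 0 := by
          simp [hx'', hj]
        have h2 : ∀ i ∈ Finset.univ.erase p, x'' i j' = x' i j' + w i * x' p j' := by
          intro i hi
          simp [hx'', (Finset.mem_erase.mp hi).1, hj]
        rw [h1, Finset.sum_congr rfl h2, Finset.sum_add_distrib, ← Finset.sum_mul, hwsum, one_mul]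
        ring
    set K : ℝ := ∑ j' ∈ Finset.univ.erase (Sum.inr p), c' p j' * x' p j' with hK
    have hKrow : ∑ j', c' p j' * x' p j' = K := by
      rw [hrowsplit p (fun j' => c' p j' * x' p j')]
      rw [hc'diag, zero_mul, zero_add, hK]
    have hcostp : ∑ j', c' p j' * x'' p j' = 0 := by
      apply Finset.sum_eq_zero
      intro j' _
      by_cases hj : j' = Sum.inr p
      · subst hj; rw [hc'diag, zero_mul]
      · have h0 : x'' p j' = 0 := by
          simp [hx'', hj]
        rw [h0, mul_zero]
    have hcosti : ∀ i ∈ Finset.univ.erase p, ∑ j', c' i j' * x'' i j'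
        ≤ (∑ j', c' i j' * x' i j') + w i * K := by
      intro i hi
      have hip := (Finset.mem_erase.mp hi).1
      rw [hrowsplit p (fun j' => c' i j' * x'' i j'), hrowsplit p (fun j' => c' i j' * x' i j')]
      have h1 : x'' i (Sum.inr p) = x' i (Sum.inr p) - w i * A := by
        simp [hx'', hip]
      have h2 : ∑ j' ∈ Finset.univ.erase (Sum.inr p), c' i j' * x'' i j'
          = ∑ j' ∈ Finset.univ.erase (Sum.inr p), c' i j' * (x' i j' + w i * x' p j') := by
        apply Finset.sum_congr rfl
        intro j' hj'
        simp [hx'', hip, (Finset.mem_erase.mp hj').1]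
      rw [h1, h2]
      have h3 : ∑ j' ∈ Finset.univ.erase (Sum.inr p), c' i j' * (x' i j' + w i * x' p j')
          = (∑ j' ∈ Finset.univ.erase (Sum.inr p), c' i j' * x' i j')
            + w i * ∑ j' ∈ Finset.univ.erase (Sum.inr p), c' i j' * x' p j' := by
        rw [Finset.mul_sum, ← Finset.sum_add_distrib]
        apply Finset.sum_congr rfl
        intro j' _
        ring
      rw [h3]
      have h4 : ∑ j' ∈ Finset.univ.erase (Sum.inr p), c' i j' * x' p j'
          ≤ c' i (Sum.inr p) * A + K := by
        rw [hA, hK, Finset.mul_sum, ← Finset.sum_add_distrib]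
        apply Finset.sum_le_sum
        intro j' hj'
        have ht := htri i p hip j' (Finset.mem_erase.mp hj').1
        have hh := mul_le_mul_of_nonneg_right ht (hnn p j')
        linarith
      have h5 := mul_le_mul_of_nonneg_left h4 (hwnn i)
      nlinarith [hwnn i]
    have hcost : ∑ i, ∑ j', c' i j' * x'' i j' ≤ ∑ i, ∑ j', c' i j' * x' i j' := by
      rw [hcolsplit (fun i => ∑ j', c' i j' * x'' i j'),
        hcolsplit (fun i => ∑ j', c' i j' * x' i j')]
      rw [hcostp, hKrow]
      have hs := Finset.sum_le_sum hcosti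
      rw [Finset.sum_add_distrib, ← Finset.sum_mul, hwsum, one_mul] at hs
      linarith
    have hsub : (Finset.univ.filter (fun i => z' (Sum.inr i) = 0 ∧
          ∃ j', j' ≠ Sum.inr i ∧ x'' i j' ≠ 0))
        ⊆ (Finset.univ.filter (fun i => z' (Sum.inr i) = 0 ∧
          ∃ j', j' ≠ Sum.inr i ∧ x' i j' ≠ 0)).erase p := by
      intro i hi
      simp only [mem_filter, mem_univ, true_and] at hi
      obtain ⟨hiz, j', hjne, hjx⟩ := hi
      have hip : i ≠ p := by
        rintro rfl
        apply hjx
        simp [hx'', hjne]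
      rw [Finset.mem_erase]
      refine ⟨hip, ?_⟩
      simp only [mem_filter, mem_univ, true_and]
      refine ⟨hiz, ?_⟩
      by_cases hj : j' = Sum.inr p
      · subst hj
        refine ⟨Sum.inr p, hjne, ?_⟩
        intro h0
        apply hjx
        simp [hx'', hw, hip, h0]
      · by_cases hx0 : x' i j' = 0
        · refine ⟨Sum.inr p, fun h => hip (Sum.inr.inj h).symm, ?_⟩
          intro h0
          apply hjx
          simp [hx'', hw, hip, hj, hx0, h0]
        · exact ⟨j', hjne, hx0⟩
    have hcard'' : (Finset.univ.filter (fun i => z' (Sum.inr i) = 0 ∧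
        ∃ j', j' ≠ Sum.inr i ∧ x'' i j' ≠ 0)).card ≤ n := by
      have hpD : p ∈ Finset.univ.filter (fun i => z' (Sum.inr i) = 0 ∧
          ∃ j', j' ≠ Sum.inr i ∧ x' i j' ≠ 0) := by
        simp only [mem_filter, mem_univ, true_and]
        exact ⟨hz0, j₀, hj₀ne, hj₀⟩
      have h1 := Finset.card_le_card hsub
      rw [Finset.card_erase_of_mem hpD] at h1
      omega
    obtain ⟨x, z, hxnn, hzb, hxd, hxc, hval⟩ := ih x'' hcard'' hnn'' hdem'' hcap''
    exact ⟨x, z, hxnn, hzb, hxd, hxc, le_trans hval (by linarith)⟩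




lemma cfl_default {F C : Type} [Fintype F] [Fintype C] (s : F → ℕ) (d : C → ℕ) (c : F → C → ℝ)
    (hfeas : ∑ j, d j ≤ ∑ i, s i)
    (M : ℝ) (hM0 : 0 ≤ M) (hcM : ∀ i j, c i j ≤ M) :
    ∃ x0 : F → C → ℝ, (∀ i j, 0 ≤ x0 i j) ∧ (∀ j, ∑ i, x0 i j = (d j : ℝ)) ∧
      (∀ i, ∑ j, x0 i j ≤ (s i : ℝ)) ∧
      (∑ i, ∑ j, c i j * x0 i j ≤ M * ∑ j, (d j : ℝ)) := by
  by_cases hs0 : ∑ i, s i = 0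
  · have hd0 : ∀ j : C, d j = 0 := by
      have : ∑ j, d j = 0 := by omega
      intro j
      exact (Finset.sum_eq_zero_iff.mp this) j (mem_univ _)
    refine ⟨fun _ _ => 0, fun _ _ => le_refl 0, ?_, ?_, ?_⟩
    · intro j; simp [hd0 j]
    · intro i; simp
    · simp only [mul_zero, Finset.sum_const_zero]
      positivity
  · set S : ℝ := ∑ i, (s i : ℝ) with hS
    have hSpos : 0 < S := by
      rw [hS, ← Nat.cast_sum]
      exact_mod_cast Nat.pos_of_ne_zero hs0
    refine ⟨fun i j => (d j : ℝ) * (s i : ℝ) / S, ?_, ?_, ?_, ?_⟩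
    · intro i j; positivity
    · intro j
      rw [← Finset.sum_div]
      rw [← Finset.mul_sum, ← hS, mul_div_assoc, div_self hSpos.ne', mul_one]
    · intro i
      rw [← Finset.sum_div]
      have h1 : ∑ j, (d j : ℝ) * (s i : ℝ) = (∑ j, (d j : ℝ)) * (s i : ℝ) := by
        rw [Finset.sum_mul]
      rw [h1]
      have h2 : ∑ j, (d j : ℝ) ≤ S := by
        rw [hS, ← Nat.cast_sum, ← Nat.cast_sum]
        exact_mod_cast hfeas
      rw [div_le_iff₀ hSpos]
      have : (0 : ℝ) ≤ (s i : ℝ) := by positivity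
      nlinarith
    · calc ∑ i, ∑ j, c i j * ((d j : ℝ) * (s i : ℝ) / S)
          ≤ ∑ i, ∑ j, M * ((d j : ℝ) * (s i : ℝ) / S) := by
            apply Finset.sum_le_sum; intro i _
            apply Finset.sum_le_sum; intro j _
            apply mul_le_mul_of_nonneg_right (hcM i j)
            positivity
        _ = M * ∑ j, ∑ i, (d j : ℝ) * (s i : ℝ) / S := by
            rw [Finset.mul_sum, Finset.sum_comm]
            apply Finset.sum_congr rfl; intro j _
            rw [Finset.mul_sum]
        _ = M * ∑ j, (d j : ℝ) := by
            congr 1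
            apply Finset.sum_congr rfl; intro j _
            rw [← Finset.sum_div, ← Finset.mul_sum]
            field_simp
            rw [hS]


/-- for feasible CFL instances (total demand at most total supply),
the metric CFL-to-TMC reduction preserves the optimal value: the infimum of CFL
objective values of `I1` equals the infimum of TMC objective values of `I2`. -/
theorem stmt_10 {F C : Type} [Fintype F] [Fintype C] [Nonempty F] [Nonempty C]
    -- CFL instance I1 = (F, C, s, d, c, f)
    (s : F → ℕ) (d : C → ℕ) (c : F → C → ℝ) (f : F → ℕ)
    (hc_nonneg : ∀ i j, 0 ≤ c i j)
    (hc_metric : ∀ (i0 i1 : F) (j0 j1 : C), c i0 j0 ≤ c i0 j1 + c i1 j1 + c i1 j0)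
    (hfeas : ∑ j, d j ≤ ∑ i, s i)
    -- the maximum unit transportation cost and the instance upper bound
    (M : ℝ)
    (hM : M = Finset.univ.sup' Finset.univ_nonempty
        (fun i : F => Finset.univ.sup' Finset.univ_nonempty fun j : C => c i j))
    (B : ℝ)
    (hB : B = (∑ i, (f i : ℝ)) + M * (∑ j, (d j : ℝ)) + 1)
    -- TMC instance I2 on client set C ⊕ F given by the metric reduction
    (d' : C ⊕ F → ℕ) (r' : C ⊕ F → ℝ) (c' : F → C ⊕ F → ℝ)
    (hd'C : ∀ j : C, d' (Sum.inl j) = d j)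
    (hd'F : ∀ i : F, d' (Sum.inr i) = s i)
    (hr'C : ∀ j : C, r' (Sum.inl j) = B)
    (hr'F : ∀ i : F, r' (Sum.inr i) = (f i : ℝ))
    (hc'C : ∀ (i : F) (j : C), c' i (Sum.inl j) = c i j)
    (hc'diag : ∀ i : F, c' i (Sum.inr i) = 0)
    (hc'off : ∀ i0 i : F, i0 ≠ i →
      c' i0 (Sum.inr i) =
        Finset.univ.inf' Finset.univ_nonempty (fun j : C => c i0 j + c i j)) :
    sInf {v : ℝ | ∃ (x : F → C → ℝ) (z : F → ℝ),
        (∀ i j, 0 ≤ x i j) ∧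
        (∀ i, z i = 0 ∨ z i = 1) ∧
        (∀ j, ∑ i, x i j = (d j : ℝ)) ∧
        (∀ i, ∑ j, x i j ≤ (s i : ℝ) * z i) ∧
        v = (∑ i, ∑ j, c i j * x i j) + (∑ i, (f i : ℝ) * z i)}
      = sInf {v : ℝ | ∃ (x' : F → C ⊕ F → ℝ) (z' : C ⊕ F → ℝ),
        (∀ i j', 0 ≤ x' i j') ∧
        (∀ j', z' j' = 0 ∨ z' j' = 1) ∧
        (∀ j', ∑ i, x' i j' = (1 - z' j') * (d' j' : ℝ)) ∧
        (∀ i, ∑ j', x' i j' ≤ (s i : ℝ)) ∧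
        v = (∑ i, ∑ j', c' i j' * x' i j') + (∑ j', r' j' * z' j')} := by
  classical
  have hz01 : ∀ {t : ℝ}, (t = 0 ∨ t = 1) → 0 ≤ t := by
    rintro t (rfl | rfl) <;> norm_num
  have hcM : ∀ i j, c i j ≤ M := by
    intro i j
    rw [hM]
    exact le_trans (Finset.le_sup' (fun j => c i j) (mem_univ j))
      (Finset.le_sup' (f := fun i => Finset.univ.sup' Finset.univ_nonempty fun j : C => c i j) (mem_univ i))
  have hM0 : 0 ≤ M := by
    obtain ⟨i⟩ := ‹Nonempty F›
    obtain ⟨j⟩ := ‹Nonempty C›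
    exact le_trans (hc_nonneg i j) (hcM i j)
  have hd0 : (0:ℝ) ≤ ∑ j, (d j : ℝ) := by positivity
  have hf0 : (0:ℝ) ≤ ∑ i, (f i : ℝ) := by positivity
  have hB1 : 1 ≤ B := by rw [hB]; nlinarith
  have hc'nn : ∀ i j', 0 ≤ c' i j' := by
    intro i j'
    match j' with
    | Sum.inl j => rw [hc'C]; exact hc_nonneg i j
    | Sum.inr i0 =>
      by_cases hii : i = i0
      · rw [← hii, hc'diag]
      · rw [hc'off i i0 hii]
        apply Finset.le_inf'
        intro j _
        exact add_nonneg (hc_nonneg _ _) (hc_nonneg _ _)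
  have hr'nn : ∀ j', 0 ≤ r' j' := by
    intro j'
    match j' with
    | Sum.inl j => rw [hr'C]; linarith
    | Sum.inr i => rw [hr'F]; positivity
  have htri : ∀ i p : F, i ≠ p → ∀ j', j' ≠ Sum.inr p →
      c' i j' ≤ c' i (Sum.inr p) + c' p j' := by
    intro i p hip j' hj'
    obtain ⟨jh, _, hjh⟩ := Finset.exists_mem_eq_inf'
      (Finset.univ_nonempty) (fun j : C => c i j + c p j)
    have hinrp : c' i (Sum.inr p) = c i jh + c p jh := by rw [hc'off i p hip, hjh]
    match j' with
    | Sum.inl j =>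
      rw [hc'C, hc'C, hinrp]
      have := hc_metric i p j jh
      linarith
    | Sum.inr i0 =>
      have hi0p : i0 ≠ p := fun h => hj' (by rw [h])
      by_cases hii : i = i0
      · rw [← hii, hc'diag]
        exact add_nonneg (hc'nn _ _) (hc'nn _ _)
      · obtain ⟨jt, _, hjt⟩ := Finset.exists_mem_eq_inf'
          (Finset.univ_nonempty) (fun j : C => c p j + c i0 j)
        have h1 : c' p (Sum.inr i0) = c p jt + c i0 jt := by rw [hc'off p i0 hi0p.symm, hjt]
        have h2 : c' i (Sum.inr i0) ≤ c i jt + c i0 jt := by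
          rw [hc'off i i0 hii]
          exact Finset.inf'_le _ (mem_univ jt)
        have h3 := hc_metric i p jt jh
        rw [hinrp, h1]
        linarith
  obtain ⟨x0, hx0nn, hx0d, hx0c, hx0cost⟩ := cfl_default s d c hfeas M hM0 hcM
  set SC := {v : ℝ | ∃ (x : F → C → ℝ) (z : F → ℝ),
      (∀ i j, 0 ≤ x i j) ∧ (∀ i, z i = 0 ∨ z i = 1) ∧
      (∀ j, ∑ i, x i j = (d j : ℝ)) ∧ (∀ i, ∑ j, x i j ≤ (s i : ℝ) * z i) ∧
      v = (∑ i, ∑ j, c i j * x i j) + (∑ i, (f i : ℝ) * z i)} with hSC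
  set ST := {v : ℝ | ∃ (x' : F → C ⊕ F → ℝ) (z' : C ⊕ F → ℝ),
      (∀ i j', 0 ≤ x' i j') ∧ (∀ j', z' j' = 0 ∨ z' j' = 1) ∧
      (∀ j', ∑ i, x' i j' = (1 - z' j') * (d' j' : ℝ)) ∧
      (∀ i, ∑ j', x' i j' ≤ (s i : ℝ)) ∧
      v = (∑ i, ∑ j', c' i j' * x' i j') + (∑ j', r' j' * z' j')} with hST
  have hmem0 : ((∑ i, ∑ j, c i j * x0 i j) + (∑ i, (f i : ℝ) * 1)) ∈ SC := by
    rw [hSC]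
    exact ⟨x0, fun _ => 1, hx0nn, fun _ => Or.inr rfl, hx0d,
      fun i => by rw [mul_one]; exact hx0c i, rfl⟩
  have hSCbdd : BddBelow SC := by
    refine ⟨0, ?_⟩
    rintro v ⟨x, z, hxnn, hzb, _, _, rfl⟩
    have h1 : 0 ≤ ∑ i, ∑ j, c i j * x i j :=
      Finset.sum_nonneg fun i _ => Finset.sum_nonneg fun j _ =>
        mul_nonneg (hc_nonneg i j) (hxnn i j)
    have h2 : 0 ≤ ∑ i, (f i : ℝ) * z i :=
      Finset.sum_nonneg fun i _ => mul_nonneg (by positivity) (hz01 (hzb i))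
    linarith
  have hSTbdd : BddBelow ST := by
    refine ⟨0, ?_⟩
    rintro v ⟨x', z', hx'nn, hz'b, _, _, rfl⟩
    have h1 : 0 ≤ ∑ i, ∑ j', c' i j' * x' i j' :=
      Finset.sum_nonneg fun i _ => Finset.sum_nonneg fun j' _ =>
        mul_nonneg (hc'nn i j') (hx'nn i j')
    have h2 : 0 ≤ ∑ j', r' j' * z' j' :=
      Finset.sum_nonneg fun j' _ => mul_nonneg (hr'nn j') (hz01 (hz'b j'))
    linarith
  have hsub : SC ⊆ ST := by
    rintro v ⟨x, z, hxnn, hzb, hxd, hxc, rfl⟩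
    rw [hST]
    refine ⟨fun i => Sum.elim (fun j => x i j)
        (fun i0 => if i0 = i then (1 - z i) * (s i : ℝ) else 0),
      Sum.elim (fun _ => (0:ℝ)) z, ?_, ?_, ?_, ?_, ?_⟩
    · intro i j'
      match j' with
      | Sum.inl j => exact hxnn i j
      | Sum.inr i0 =>
        simp only [Sum.elim_inr]
        by_cases h : i0 = i
        · rw [if_pos h]
          rcases hzb i with h0 | h1
          · rw [h0]; positivity
          · rw [h1]; norm_num
        · rw [if_neg h]
    · intro j'
      match j' with
      | Sum.inl j => exact Or.inl rfl
      | Sum.inr i => exact hzb i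
    · intro j'
      match j' with
      | Sum.inl j =>
        simp only [Sum.elim_inl]
        rw [hd'C, sub_zero, one_mul]
        exact hxd j
      | Sum.inr i0 =>
        simp only [Sum.elim_inr]
        rw [hd'F, Finset.sum_ite_eq]
        simp
    · intro i
      rw [Fintype.sum_sum_type]
      simp only [Sum.elim_inl, Sum.elim_inr]
      have hsum2 : ∑ i0, (if i0 = i then (1 - z i) * (s i : ℝ) else 0)
          = (1 - z i) * (s i : ℝ) := by
        rw [Finset.sum_ite_eq']
        simp
      rw [hsum2]
      have hr : (s i : ℝ) * z i + (1 - z i) * (s i : ℝ) = (s i : ℝ) := by ring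
      linarith [hxc i]
    · have hcost : ∀ i, (∑ j', c' i j' * (Sum.elim (fun j => x i j)
          (fun i0 => if i0 = i then (1 - z i) * (s i : ℝ) else 0) j'))
          = ∑ j, c i j * x i j := by
        intro i
        rw [Fintype.sum_sum_type]
        simp only [Sum.elim_inl, Sum.elim_inr]
        have h1 : ∑ j, c' i (Sum.inl j) * x i j = ∑ j, c i j * x i j :=
          Finset.sum_congr rfl fun j _ => by rw [hc'C]
        have h2 : ∑ i0, c' i (Sum.inr i0) * (if i0 = i then (1 - z i) * (s i : ℝ) else 0)
            = 0 := by
          apply Finset.sum_eq_zero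
          intro i0 _
          by_cases h : i0 = i
          · rw [if_pos h, h, hc'diag, zero_mul]
          · rw [if_neg h, mul_zero]
        rw [h1, h2, add_zero]
      have hpen : ∑ j', r' j' * (Sum.elim (fun _ => (0:ℝ)) z j') = ∑ i, (f i:ℝ) * z i := by
        rw [Fintype.sum_sum_type]
        simp only [Sum.elim_inl, Sum.elim_inr, mul_zero, Finset.sum_const_zero, zero_add]
        exact Finset.sum_congr rfl fun i _ => by rw [hr'F]
      have hcost' : (∑ i, ∑ j', c' i j' * (Sum.elim (fun j => x i j)
          (fun i0 => if i0 = i then (1 - z i) * (s i : ℝ) else 0) j'))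
          = ∑ i, ∑ j, c i j * x i j :=
        Finset.sum_congr rfl fun i _ => hcost i
      rw [hcost', hpen]
  apply le_antisymm
  · apply le_csInf ⟨_, hsub hmem0⟩
    rintro v ⟨x', z', hx'nn, hz'b, hdem, hcap, rfl⟩
    by_cases hall : ∀ j : C, z' (Sum.inl j) = 0
    · obtain ⟨x, z, h1, h2, h3, h4, h5⟩ := key_lemma s d c f d' c' hd'C hd'F hc'C hc'diag
        hc'nn htri z' hz'b hall (Fintype.card F) x'
        (le_trans (Finset.card_filter_le _ _) (le_of_eq Finset.card_univ)) hx'nn hdem hcap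
      have hmem : ((∑ i, ∑ j, c i j * x i j) + (∑ i, (f i : ℝ) * z i)) ∈ SC := by
        rw [hSC]
        exact ⟨x, z, h1, h2, h3, h4, rfl⟩
      apply le_trans (csInf_le hSCbdd hmem)
      have hpen : ∑ j', r' j' * z' j' = ∑ i, (f i : ℝ) * z' (Sum.inr i) := by
        rw [Fintype.sum_sum_type]
        rw [Finset.sum_eq_zero (fun j (_ : j ∈ Finset.univ) => by rw [hall j, mul_zero]),
          zero_add]
        exact Finset.sum_congr rfl fun i _ => by rw [hr'F]
      rw [hpen]
      exact h5
    · push_neg at hall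
      obtain ⟨j1, hj1⟩ := hall
      have hz1 : z' (Sum.inl j1) = 1 := (hz'b _).resolve_left hj1
      have hcost0 : 0 ≤ ∑ i, ∑ j', c' i j' * x' i j' :=
        Finset.sum_nonneg fun i _ => Finset.sum_nonneg fun j' _ =>
          mul_nonneg (hc'nn i j') (hx'nn i j')
      have hpge : B ≤ ∑ j', r' j' * z' j' := by
        have hone : r' (Sum.inl j1) * z' (Sum.inl j1) = B := by rw [hz1, hr'C, mul_one]
        have hs := Finset.single_le_sum (f := fun j' => r' j' * z' j')
          (fun j' _ => mul_nonneg (hr'nn j') (hz01 (hz'b j'))) (mem_univ (Sum.inl j1))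
        exact le_trans (le_of_eq hone.symm) hs
      apply le_trans (csInf_le hSCbdd hmem0)
      have hv0 : (∑ i, ∑ j, c i j * x0 i j) + (∑ i, (f i : ℝ) * 1) ≤ B - 1 := by
        simp only [mul_one]
        rw [hB] at *
        linarith
      linarith
  · exact csInf_le_csInf hSTbdd ⟨_, hmem0⟩ hsub
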